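/- For every v ∈ ℝ with u = √(1+v²), the determinant of A(v) equals 2v² − 1. Moreover, if v > 1/√2 then A(v) is positive definite, while if 0 < v < 1/√2 then A(v) has one positive and one negative eigenvalue; consequently the shock formed by ψ₋ (with v₋² > 1/2) and ψ₊ (with v₊² < 1/2) is a Lax 1-shock. -/

import Mathlib

open Real Matrix Filter Topology Set

noncomputable section

/-- The state space condition `ψ⁰ > |ψ¹|`. -/
def StateSpace (ψ : Fin 2 → ℝ) : Prop := |ψ 1| < ψ 0

/-- Temperature variable `θ(ψ) = ((ψ⁰)² − (ψ¹)²)^(−1/2)`. -/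
def θf (ψ : Fin 2 → ℝ) : ℝ := (Real.sqrt ((ψ 0) ^ 2 - (ψ 1) ^ 2))⁻¹

/-- `u(ψ) = θ(ψ) ψ⁰`. -/
def uf (ψ : Fin 2 → ℝ) : ℝ := θf ψ * ψ 0

/-- `v(ψ) = θ(ψ) ψ¹`. -/
def vf (ψ : Fin 2 → ℝ) : ℝ := θf ψ * ψ 1

/-- Ideal stress component `T⁰¹`. -/
def T01 (ψ : Fin 2 → ℝ) : ℝ := (4 / 3) * (θf ψ) ^ 4 * uf ψ * vf ψ

/-- Ideal stress component `T¹¹`. -/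
def T11 (ψ : Fin 2 → ℝ) : ℝ := (θf ψ) ^ 4 * ((4 / 3) * (vf ψ) ^ 2 + 1 / 3)

/-- `u = √(1+v²)` as a function of the velocity `v`. -/
def uu (v : ℝ) : ℝ := Real.sqrt (1 + v ^ 2)

/-- Viscosity matrix `B̃_visc(v)`. -/
def Bvisc (v : ℝ) : Matrix (Fin 2) (Fin 2) ℝ :=
  !![(uu v) ^ 2 * v ^ 2, -((uu v) ^ 3 * v); -((uu v) ^ 3 * v), (uu v) ^ 4]

/-- Thermal regulator matrix `B_ther(v)`. -/
def Bther (v : ℝ) : Matrix (Fin 2) (Fin 2) ℝ :=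
  !![16 * (uu v) ^ 2 * v ^ 2, -(4 * uu v * v * (4 * v ^ 2 + 1));
     -(4 * uu v * v * (4 * v ^ 2 + 1)), (4 * v ^ 2 + 1) ^ 2]

/-- Velocity regulator matrix `B_velo(v)`. -/
def Bvelo (v : ℝ) : Matrix (Fin 2) (Fin 2) ℝ :=
  !![((uu v) ^ 2 + v ^ 2) ^ 2, -(2 * ((uu v) ^ 2 + v ^ 2) * uu v * v);
     -(2 * ((uu v) ^ 2 + v ^ 2) * uu v * v), 4 * (uu v) ^ 2 * v ^ 2]

/-- The full dissipation matrix `B(v) = η̃ B̃_visc − μ B_ther − ν B_velo`. -/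
def Bmat (η μ ν v : ℝ) : Matrix (Fin 2) (Fin 2) ℝ :=
  η • Bvisc v - μ • Bther v - ν • Bvelo v

/-- The (rescaled) flux Jacobian `A(v)`. -/
def Amat (v : ℝ) : Matrix (Fin 2) (Fin 2) ℝ :=
  !![v * (6 * (uu v) ^ 2 - 1), -(uu v * (6 * v ^ 2 + 1));
     -(uu v * (6 * v ^ 2 + 1)), v * (6 * v ^ 2 + 3)]

/-- Upstream velocity `v₋(q̃)`. -/
def vminus (q : ℝ) : ℝ :=
  Real.sqrt (((2 * q - 1) + Real.sqrt (q * (4 * q - 3))) / (4 * (1 - q)))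

/-- Downstream velocity `v₊(q̃)`. -/
def vplus (q : ℝ) : ℝ :=
  Real.sqrt (((2 * q - 1) - Real.sqrt (q * (4 * q - 3))) / (4 * (1 - q)))

/-- The state `ψ` with velocity `v` on the Hugoniot curve `T¹¹ = 1`. -/
def psiOf (v : ℝ) : Fin 2 → ℝ :=
  ((4 / 3) * v ^ 2 + 1 / 3) ^ ((1 : ℝ) / 4) • ![Real.sqrt (1 + v ^ 2), v]

/-- Upstream state `ψ₋(q̃)`. -/
def psiMinus (q : ℝ) : Fin 2 → ℝ := psiOf (vminus q)

/-- Downstream state `ψ₊(q̃)`. -/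
def psiPlus (q : ℝ) : Fin 2 → ℝ := psiOf (vplus q)

/-- `ψ : ℝ → Ψ` is a C¹ solution of the profile ODE
`B(v(ψ))·ψ' = (T⁰¹(ψ) − q̃^(−1/2), T¹¹(ψ) − 1)`. -/
def ProfileSolution (η μ ν q : ℝ) (ψ : ℝ → Fin 2 → ℝ) : Prop :=
  ContDiff ℝ 1 ψ ∧ (∀ t, StateSpace (ψ t)) ∧
  ∀ t, (Bmat η μ ν (vf (ψ t))).mulVec (deriv ψ t) =
    ![T01 (ψ t) - (Real.sqrt q)⁻¹, T11 (ψ t) - 1]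

end


lemma aux_posDef_fin_two {p r s : ℝ} (hp : 0 < p) (hdet : 0 < p * s - r ^ 2) :
    (!![p, r; r, s]).PosDef := by
  refine Matrix.PosDef.of_dotProduct_mulVec_pos ?_ ?_
  · show _ᴴ = _
    ext i j
    fin_cases i <;> fin_cases j <;> simp
  · intro x hx
    have hx' : x 0 ≠ 0 ∨ x 1 ≠ 0 := by
      by_contra h
      push_neg at h
      exact hx (funext fun i => by fin_cases i <;> simp [h.1, h.2])
    simp [Matrix.mulVec, dotProduct, Fin.sum_univ_two]
    rcases hx' with h | h
    · rcases eq_or_ne (x 1) 0 with h1 | h1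
      · simp only [h1]
        nlinarith [sq_pos_of_ne_zero h]
      · nlinarith [sq_nonneg (p * x 0 + r * x 1), sq_pos_of_ne_zero h1]
    · nlinarith [sq_nonneg (p * x 0 + r * x 1), sq_pos_of_ne_zero h]

lemma aux_eig_fin_two {p r s : ℝ} (hr : r ≠ 0) (hdet : p * s - r ^ 2 < 0) :
    ∃ (a b : ℝ) (x y : Fin 2 → ℝ), x ≠ 0 ∧ y ≠ 0 ∧
      (!![p, r; r, s]).mulVec x = a • x ∧ (!![p, r; r, s]).mulVec y = b • y ∧
      0 < a ∧ b < 0 := by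
  have hnn : 0 ≤ (p + s) ^ 2 - 4 * (p * s - r ^ 2) := by nlinarith [sq_nonneg (p - s)]
  set D := Real.sqrt ((p + s) ^ 2 - 4 * (p * s - r ^ 2)) with hD
  have hD2 : D ^ 2 = (p + s) ^ 2 - 4 * (p * s - r ^ 2) := Real.sq_sqrt hnn
  have hDnn : 0 ≤ D := Real.sqrt_nonneg _
  clear_value D
  refine ⟨((p + s) + D) / 2, ((p + s) - D) / 2,
    ![r, ((p + s) + D) / 2 - p], ![r, ((p + s) - D) / 2 - p], ?_, ?_, ?_, ?_, ?_, ?_⟩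
  · intro h; exact hr (by simpa using congrFun h 0)
  · intro h; exact hr (by simpa using congrFun h 0)
  · funext i; fin_cases i
    · simp [Matrix.mulVec, dotProduct, Fin.sum_univ_two]; ring
    · simp [Matrix.mulVec, dotProduct, Fin.sum_univ_two]
      linear_combination (-1/4 : ℝ) * hD2
  · funext i; fin_cases i
    · simp [Matrix.mulVec, dotProduct, Fin.sum_univ_two]; ring
    · simp [Matrix.mulVec, dotProduct, Fin.sum_univ_two]
      linear_combination (-1/4 : ℝ) * hD2
  · nlinarith
  · nlinarith

lemma aux_uu_sq (v : ℝ) : (uu v) ^ 2 = 1 + v ^ 2 :=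
  Real.sq_sqrt (by positivity)

lemma aux_uu_pos (v : ℝ) : 0 < uu v := Real.sqrt_pos.mpr (by positivity)

lemma aux_Amat_eq (v : ℝ) : Amat v =
    !![v * (6 * (uu v) ^ 2 - 1), -(uu v * (6 * v ^ 2 + 1));
       -(uu v * (6 * v ^ 2 + 1)), v * (6 * v ^ 2 + 3)] := rfl

lemma aux_det_A (v : ℝ) : (Amat v).det = 2 * v ^ 2 - 1 := by
  rw [aux_Amat_eq, Matrix.det_fin_two_of]
  linear_combination (6 * v ^ 2 - 1) * aux_uu_sq v

lemma aux_pos_part (v : ℝ) (hv : (Real.sqrt 2)⁻¹ < v) : (Amat v).PosDef := by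
  have h2 : ((Real.sqrt 2)⁻¹ : ℝ) ^ 2 = 1 / 2 := by
    rw [inv_pow, Real.sq_sqrt (by norm_num : (0:ℝ) ≤ 2)]; norm_num
  have hnn : (0:ℝ) ≤ (Real.sqrt 2)⁻¹ := by positivity
  have hv0 : 0 < v := lt_of_le_of_lt hnn hv
  have hv2 : 1 / 2 < v ^ 2 := by
    rw [← h2]; exact pow_lt_pow_left₀ hv hnn (by norm_num)
  rw [aux_Amat_eq]
  refine aux_posDef_fin_two ?_ ?_
  · nlinarith [aux_uu_sq v, sq_nonneg v]
  · have h := aux_uu_sq v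
    have : v * (6 * (uu v) ^ 2 - 1) * (v * (6 * v ^ 2 + 3)) -
        (-(uu v * (6 * v ^ 2 + 1))) ^ 2 = 2 * v ^ 2 - 1 := by
      linear_combination (6 * v ^ 2 - 1) * h
    linarith
  
lemma aux_neg_part (v : ℝ) (hv0 : 0 < v) (hv : v < (Real.sqrt 2)⁻¹) :
    ∃ (a b : ℝ) (x y : Fin 2 → ℝ), x ≠ 0 ∧ y ≠ 0 ∧
      (Amat v).mulVec x = a • x ∧ (Amat v).mulVec y = b • y ∧ 0 < a ∧ b < 0 := by
  have h2 : ((Real.sqrt 2)⁻¹ : ℝ) ^ 2 = 1 / 2 := by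
    rw [inv_pow, Real.sq_sqrt (by norm_num : (0:ℝ) ≤ 2)]; norm_num
  have hv2 : v ^ 2 < 1 / 2 := by
    rw [← h2]; exact pow_lt_pow_left₀ hv hv0.le (by norm_num)
  rw [aux_Amat_eq]
  refine aux_eig_fin_two ?_ ?_
  · have := aux_uu_pos v
    intro h
    nlinarith [sq_nonneg v]
  · have h := aux_uu_sq v
    have : v * (6 * (uu v) ^ 2 - 1) * (v * (6 * v ^ 2 + 3)) -
        (-(uu v * (6 * v ^ 2 + 1))) ^ 2 = 2 * v ^ 2 - 1 := by
      linear_combination (6 * v ^ 2 - 1) * h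
    linarith

/-- `det A(v) = 2v² − 1`; `A(v)` is positive definite for `v > 1/√2` and has one
positive and one negative eigenvalue for `0 < v < 1/√2`; consequently the shock
formed by `ψ₋` and `ψ₊` is a Lax 1-shock. -/
theorem det_A_and_Lax_shock :
    (∀ v : ℝ, (Amat v).det = 2 * v ^ 2 - 1) ∧
    (∀ v : ℝ, (Real.sqrt 2)⁻¹ < v → (Amat v).PosDef) ∧
    (∀ v : ℝ, 0 < v → v < (Real.sqrt 2)⁻¹ →
      ∃ (a b : ℝ) (x y : Fin 2 → ℝ), x ≠ 0 ∧ y ≠ 0 ∧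
        (Amat v).mulVec x = a • x ∧ (Amat v).mulVec y = b • y ∧ 0 < a ∧ b < 0) ∧
    (∀ q ∈ Set.Ioo (3 / 4 : ℝ) 1,
      (Amat (vminus q)).PosDef ∧
      ∃ (a b : ℝ) (x y : Fin 2 → ℝ), x ≠ 0 ∧ y ≠ 0 ∧
        (Amat (vplus q)).mulVec x = a • x ∧ (Amat (vplus q)).mulVec y = b • y ∧
        0 < a ∧ b < 0) := by
  have h2inv : ((Real.sqrt 2)⁻¹ : ℝ) = Real.sqrt (1 / 2) := by
    rw [one_div, Real.sqrt_inv]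
  refine ⟨aux_det_A, aux_pos_part, aux_neg_part, ?_⟩
  intro q hq
  obtain ⟨hq1, hq2⟩ := hq
  have hden : (0:ℝ) < 4 * (1 - q) := by linarith
  have hqp : (0:ℝ) ≤ q * (4 * q - 3) := by nlinarith
  have hsnn : 0 ≤ Real.sqrt (q * (4 * q - 3)) := Real.sqrt_nonneg _
  constructor
  · refine aux_pos_part _ ?_
    rw [h2inv, vminus]
    refine Real.sqrt_lt_sqrt (by norm_num) ?_
    rw [lt_div_iff₀ hden]
    linarith
  · have hnum : 0 < (2 * q - 1) - Real.sqrt (q * (4 * q - 3)) := by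
      have : Real.sqrt (q * (4 * q - 3)) < 2 * q - 1 := by
        rw [Real.sqrt_lt' (by linarith)]
        nlinarith
      linarith
    refine aux_neg_part _ ?_ ?_
    · rw [vplus]
      exact Real.sqrt_pos.mpr (div_pos hnum hden)
    · rw [h2inv, vplus]
      refine Real.sqrt_lt_sqrt (le_of_lt (div_pos hnum hden)) ?_
      rw [div_lt_iff₀ hden]
      have h43 : (4 * q - 3 : ℝ) < Real.sqrt (q * (4 * q - 3)) := by
        rw [Real.lt_sqrt (by linarith)]
        nlinarith
      linarith
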